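/- (Lift identity) For every permutation σ = (σ_1, …, σ_k) of {1, …, k} with k ≥ 1, the scores of σ and of σ⁺ = (σ_1+1, …, σ_k+1) satisfy S(σ) + S(σ⁺) = 1. -/

import Mathlib

/-- Parity sign: `1` for even integers, `-1` for odd integers. -/
def pSign (x : ℤ) : ℤ := if Even x then 1 else -1

/-- Local cost `C_{xy} = δ_{xy} − ((p_x p_y + 1)/2)·sgn(x−y)·p_x`. -/
def locCost (x y : ℤ) : ℤ :=
  (if x = y then 1 else 0) - ((pSign x * pSign y + 1) / 2) * (x - y).sign * pSign x

/-- Sum of local costs over consecutive pairs of the sequence. -/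
def pairCostSum (l : List ℤ) : ℤ := ((l.zip l.tail).map fun q => locCost q.1 q.2).sum

/-- Score `S(σ) = (1 + p_{σ₁})/2 + Σ_{i=1}^{k-1} C_{σ_i σ_{i+1}}`. -/
def score (l : List ℤ) : ℤ := (1 + pSign (l.headD 0)) / 2 + pairCostSum l

/-- Circular score `S^c(σ) = Σ_{i=1}^{k} C_{σ_i, σ_{(i mod k)+1}}` (indices cyclic). -/
def cscore (l : List ℤ) : ℤ := ((l.zip (l.rotate 1)).map fun q => locCost q.1 q.2).sum

lemma pSign_succ (x : ℤ) : pSign (x + 1) = -pSign x := by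
  unfold pSign
  by_cases h : Even x <;> simp [Int.even_add_one, h]

lemma locCost_add (x y : ℤ) (h : x ≠ y) : locCost x y + locCost (x+1) (y+1) = 0 := by
  unfold locCost
  rw [pSign_succ, pSign_succ]
  have : x + 1 - (y + 1) = x - y := by ring
  rw [this]
  simp [h]

lemma pairCostSum_cons (a b : ℤ) (t : List ℤ) :
    pairCostSum (a :: b :: t) = locCost a b + pairCostSum (b :: t) := by
  simp [pairCostSum]

lemma pairCostSum_add (l : List ℤ) (hl : l.Nodup) :
    pairCostSum l + pairCostSum (l.map (· + 1)) = 0 := by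
  induction l with
  | nil => simp [pairCostSum]
  | cons a t ih =>
    cases t with
    | nil => simp [pairCostSum]
    | cons b t' =>
      have hab : a ≠ b := by
        intro h; subst h; simp at hl
      have ht : (b :: t').Nodup := hl.of_cons
      have := ih ht
      simp only [List.map_cons] at *
      rw [pairCostSum_cons, pairCostSum_cons]
      have h2 := locCost_add a b hab
      linarith

/-- Lift identity: for every permutation `σ` of `{1, …, k}` with `k ≥ 1`,
`S(σ) + S(σ⁺) = 1`, where `σ⁺ = (σ₁+1, …, σ_k+1)`. -/
theorem lift_identity (k : ℕ) (hk : 1 ≤ k) (l : List ℤ)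
    (hl : l.Perm ((List.range k).map fun i => (i : ℤ) + 1)) :
    score l + score (l.map (· + 1)) = 1 := by
  simp only [List.pure_def, List.bind_eq_flatMap] at hl
  have e : ((List.range k).flatMap fun a : ℕ => [(a : ℤ)])
      = (List.range k).map (fun a : ℕ => (a : ℤ)) := List.flatMap_pure_eq_map _ _
  rw [e, List.map_map] at hl
  have hnd : l.Nodup := by
    refine hl.nodup_iff.mpr ?_
    apply List.Nodup.map _ (List.nodup_range (n := k))
    intro a b h
    simp only [Function.comp_apply] at h
    omega
  have hlen : l.length = k := by
    rw [hl.length_eq, List.length_map, List.length_range]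
  have hne : l ≠ [] := by
    intro h
    rw [h] at hlen
    simp at hlen
    omega
  obtain ⟨a, t, rfl⟩ := List.exists_cons_of_ne_nil hne
  have hp := pairCostSum_add (a :: t) hnd
  simp only [List.map_cons] at hp
  simp only [score, List.map_cons, List.headD_cons, pSign_succ]
  have hpa : pSign a = 1 ∨ pSign a = -1 := by
    unfold pSign; by_cases h : Even a <;> simp [h]
  rcases hpa with h | h <;> rw [h] <;> norm_num <;> linarith
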